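/- Fix a graded system of Hilbert spaces with product ∘. Let σ < −1 and ρ, s ∈ ℝ, and take the weights w₀ = 1 and w_n = (n!)^σ·2^{ρn}·(1 + n)^s for n ≥ 1. Then there exists a constant γ > 0 such that for all elements a, b of the algebra, ‖a ∘ b‖_w ≤ γ·‖a‖_w·‖b‖_w. -/

import Mathlib

/-! A graded system of Hilbert spaces: a family `(E n)_{n ≥ 1}` of real inner product spaces
together with bilinear maps `mul p q : E p →ₗ E q →ₗ E (p+q)`.  An element of the associated
algebra is a pair `(a₀, (a n)_{n ≥ 1})` with `a₀ : ℝ`, `a n : E n`, all but finitely many `a n`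
zero (the component `a 0` is unused dead data).  -/

/-- The degree-`n` component (`n ≥ 1`) of the product of the elements `(a₀, a)` and `(b₀, b)`:
`c n = a₀ • b n + b₀ • a n + ∑_{p+q=n, p,q ≥ 1} a p ∘ b q`. -/
noncomputable def gradedMul {E : ℕ → Type*} [∀ n, NormedAddCommGroup (E n)]
    [∀ n, InnerProductSpace ℝ (E n)]
    (mul : ∀ p q : ℕ, E p →ₗ[ℝ] E q →ₗ[ℝ] E (p + q))
    (a₀ : ℝ) (a : ∀ n, E n) (b₀ : ℝ) (b : ∀ n, E n) (n : ℕ) : E n :=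
  a₀ • b n + b₀ • a n +
    ∑ p ∈ Finset.Ioo 0 n,
      if h : p + (n - p) = n then cast (congrArg E h) (mul p (n - p) (a p) (b (n - p))) else 0

/-- The weighted Hilbert norm `‖a‖_w = √(a₀² + ∑_{n ≥ 1} w n · ‖a n‖²)` (the weight `w 0 = 1`
of the scalar component is built in). -/
noncomputable def wnorm {E : ℕ → Type*} [∀ n, NormedAddCommGroup (E n)]
    (w : ℕ → ℝ) (a₀ : ℝ) (a : ∀ n, E n) : ℝ :=
  Real.sqrt (a₀ ^ 2 + ∑' n : ℕ, w (n + 1) * ‖a (n + 1)‖ ^ 2)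

/-- The weight family `w n (σ, ρ, s) = (n!)^σ · 2^(ρn) · (1+n)^s` on positive integers,
with real exponents (real powers). -/
noncomputable def wgt (σ ρ s : ℝ) (n : ℕ) : ℝ :=
  ((n.factorial : ℝ)) ^ σ * (2 : ℝ) ^ (ρ * n) * (1 + (n : ℝ)) ^ s

lemma gns_cast_norm {E : ℕ → Type*} [∀ n, NormedAddCommGroup (E n)] {m n : ℕ}
    (h : m = n) (x : E m) : ‖cast (congrArg E h) x‖ = ‖x‖ := by subst h; rfl

lemma gns_cast_zero {E : ℕ → Type*} [∀ n, NormedAddCommGroup (E n)] {m n : ℕ}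
    (h : m = n) : cast (congrArg E h) (0 : E m) = 0 := by subst h; rfl

lemma gns_two_pow_le_centralBinom (n : ℕ) : 2 ^ n ≤ n.centralBinom := by
  induction n with
  | zero => simp [Nat.centralBinom]
  | succ n ih =>
    have h := Nat.succ_mul_centralBinom_succ n
    have h2 : (n + 1) * 2 ^ (n + 1) ≤ (n + 1) * n.centralBinom.succ * 0 + 2 * (2 * n + 1) * n.centralBinom := by
      calc (n + 1) * 2 ^ (n + 1) = 2 * (n + 1) * 2 ^ n := by ring
        _ ≤ 2 * (2 * n + 1) * n.centralBinom := by
            apply Nat.mul_le_mul <;> omega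
        _ = _ := by ring
    have : (n + 1) * 2 ^ (n + 1) ≤ (n + 1) * Nat.centralBinom (n + 1) := by omega
    exact Nat.le_of_mul_le_mul_left this (Nat.succ_pos n)

lemma gns_two_pow_min_le_choose (p q : ℕ) : 2 ^ min p q ≤ (p + q).choose p := by
  rcases le_total p q with h | h
  · rw [min_eq_left h]
    calc 2 ^ p ≤ p.centralBinom := gns_two_pow_le_centralBinom p
      _ = (2 * p).choose p := Nat.centralBinom_eq_two_mul_choose p
      _ ≤ (p + q).choose p := Nat.choose_le_choose p (by omega)
  · rw [min_eq_right h, Nat.choose_symm_add]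
    calc 2 ^ q ≤ q.centralBinom := gns_two_pow_le_centralBinom q
      _ = (2 * q).choose q := Nat.centralBinom_eq_two_mul_choose q
      _ ≤ (p + q).choose q := Nat.choose_le_choose q (by omega)

lemma gns_wgt_pos (σ ρ s : ℝ) (n : ℕ) : 0 < wgt σ ρ s n := by
  unfold wgt
  have h1 : (0:ℝ) < n.factorial := by exact_mod_cast n.factorial_pos
  have h2 : (0:ℝ) < 1 + (n:ℝ) := by positivity
  positivity

lemma gns_wkey (σ ρ s : ℝ) (hσ : σ ≤ 0) (p q : ℕ) :
    wgt σ ρ s (p + q) ≤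
      ((2:ℝ) ^ σ) ^ (min p q) * (1 + (min p q : ℝ)) ^ (⌈|s|⌉₊) *
        (wgt σ ρ s p * wgt σ ρ s q) := by
  set m := min p q with hm
  have h20 : (0:ℝ) ≤ 2 := by norm_num
  have hfp : (0:ℝ) < p.factorial := by exact_mod_cast p.factorial_pos
  have hfq : (0:ℝ) < q.factorial := by exact_mod_cast q.factorial_pos
  have hfn : (0:ℝ) < (p+q).factorial := by exact_mod_cast (p+q).factorial_pos
  have hP : (0:ℝ) < 1 + (p:ℝ) := by positivity
  have hQ : (0:ℝ) < 1 + (q:ℝ) := by positivity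
  have hM : (0:ℝ) < 1 + (m:ℝ) := by positivity
  have hN : (0:ℝ) < 1 + ((p:ℝ)+(q:ℝ)) := by positivity
  -- factorial part
  have hch : (((p+q).factorial : ℕ) : ℝ) =
      (((p+q).choose q : ℕ) : ℝ) * (p.factorial : ℝ) * (q.factorial : ℝ) := by
    exact_mod_cast (Nat.add_choose_mul_factorial_mul_factorial p q).symm
  have hchoose : ((2:ℝ)^m) ≤ (((p+q).choose q : ℕ) : ℝ) := by
    have h' := gns_two_pow_min_le_choose q p
    rw [Nat.add_comm q p, Nat.min_comm q p] at h'
    exact_mod_cast h'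
  have hpow : ((2:ℝ)^(m:ℕ)) ^ σ = ((2:ℝ)^σ)^(m:ℕ) := by
    rw [← Real.rpow_natCast (2:ℝ) m, ← Real.rpow_mul h20, mul_comm,
      Real.rpow_mul h20, Real.rpow_natCast]
  have h1 : (((p+q).factorial : ℕ) : ℝ) ^ σ ≤
      ((2:ℝ)^σ)^m * ((p.factorial:ℝ)^σ * (q.factorial:ℝ)^σ) := by
    rw [hch, Real.mul_rpow (by positivity) hfq.le,
      Real.mul_rpow (by positivity) hfp.le]
    have hle := Real.rpow_le_rpow_of_nonpos (by positivity : (0:ℝ) < 2^m) hchoose hσ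
    rw [hpow] at hle
    have e1 : (0:ℝ) ≤ (p.factorial:ℝ)^σ := (Real.rpow_pos_of_pos hfp σ).le
    have e2 : (0:ℝ) ≤ (q.factorial:ℝ)^σ := (Real.rpow_pos_of_pos hfq σ).le
    calc (((p+q).choose q : ℕ) : ℝ)^σ * (p.factorial:ℝ)^σ * (q.factorial:ℝ)^σ
        ≤ ((2:ℝ)^σ)^m * (p.factorial:ℝ)^σ * (q.factorial:ℝ)^σ := by gcongr
      _ = ((2:ℝ)^σ)^m * ((p.factorial:ℝ)^σ * (q.factorial:ℝ)^σ) := by ring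
  -- exponential part
  have h2 : (2:ℝ) ^ (ρ * ((p:ℝ)+(q:ℝ))) = 2^(ρ*(p:ℝ)) * 2^(ρ*(q:ℝ)) := by
    rw [← Real.rpow_add (by norm_num : (0:ℝ) < 2)]; ring_nf
  -- polynomial part
  have hMs : 0 < (1+(m:ℝ)) ^ s := Real.rpow_pos_of_pos hM s
  have h3 : (1 + ((p:ℝ)+(q:ℝ))) ^ s ≤
      (1 + (m:ℝ)) ^ |s| * ((1+(p:ℝ))^s * (1+(q:ℝ))^s) := by
    rcases le_or_gt 0 s with hs | hs
    · rw [abs_of_nonneg hs]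
      have key : 1 + ((p:ℝ)+(q:ℝ)) ≤ (1+(m:ℝ)) * ((1+(p:ℝ)) * (1+(q:ℝ))) := by
        have hm0 : (0:ℝ) ≤ (m:ℝ) := Nat.cast_nonneg m
        calc 1 + ((p:ℝ)+(q:ℝ)) ≤ (1+(p:ℝ)) * (1+(q:ℝ)) := by
              nlinarith [mul_nonneg (Nat.cast_nonneg (α := ℝ) p)
                (Nat.cast_nonneg (α := ℝ) q)]
          _ ≤ (1+(m:ℝ)) * ((1+(p:ℝ)) * (1+(q:ℝ))) :=
              le_mul_of_one_le_left (by positivity) (by linarith)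
      calc (1 + ((p:ℝ)+(q:ℝ))) ^ s ≤ ((1+(m:ℝ)) * ((1+(p:ℝ)) * (1+(q:ℝ)))) ^ s :=
            Real.rpow_le_rpow hN.le key hs
        _ = (1 + (m:ℝ)) ^ s * ((1+(p:ℝ))^s * (1+(q:ℝ))^s) := by
            rw [Real.mul_rpow hM.le (by positivity), Real.mul_rpow hP.le hQ.le]
    · rw [abs_of_neg hs]
      have key : (1+(p:ℝ)) * (1+(q:ℝ)) ≤ (1+(m:ℝ)) * (1 + ((p:ℝ)+(q:ℝ))) := by
        rcases min_cases p q with ⟨h1', h2'⟩ | ⟨h1', h2'⟩ <;>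
          · rw [hm, h1']
            nlinarith [Nat.cast_nonneg (α := ℝ) p, Nat.cast_nonneg (α := ℝ) q]
      have hle := Real.rpow_le_rpow_of_nonpos (by positivity) key hs.le
      rw [Real.mul_rpow hM.le hN.le, Real.mul_rpow hP.le hQ.le] at hle
      rw [Real.rpow_neg hM.le]
      calc (1 + ((p:ℝ)+(q:ℝ)))^s
          = ((1+(m:ℝ))^s)⁻¹ * ((1+(m:ℝ))^s * (1 + ((p:ℝ)+(q:ℝ)))^s) := by
            rw [inv_mul_cancel_left₀ hMs.ne']
        _ ≤ ((1+(m:ℝ))^s)⁻¹ * ((1+(p:ℝ))^s * (1+(q:ℝ))^s) :=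
            mul_le_mul_of_nonneg_left hle (by positivity)
  -- k-power bound
  have h3' : (1 + (m:ℝ)) ^ |s| ≤ (1 + (m:ℝ)) ^ (⌈|s|⌉₊ : ℕ) := by
    rw [← Real.rpow_natCast (1 + (m:ℝ)) ⌈|s|⌉₊]
    refine Real.rpow_le_rpow_of_exponent_le ?_ (Nat.le_ceil _)
    have : (0:ℝ) ≤ (m:ℝ) := Nat.cast_nonneg m
    linarith
  have h3'' : (1 + ((p:ℝ)+(q:ℝ))) ^ s ≤
      (1 + (m:ℝ)) ^ (⌈|s|⌉₊ : ℕ) * ((1+(p:ℝ))^s * (1+(q:ℝ))^s) :=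
    h3.trans (mul_le_mul_of_nonneg_right h3' (by positivity))
  -- combine
  have hA : (0:ℝ) < ((2:ℝ)^σ)^m := by positivity
  have hFp : (0:ℝ) < (p.factorial:ℝ)^σ := Real.rpow_pos_of_pos hfp σ
  have hFq : (0:ℝ) < (q.factorial:ℝ)^σ := Real.rpow_pos_of_pos hfq σ
  have hEp : (0:ℝ) < (2:ℝ)^(ρ*(p:ℝ)) := Real.rpow_pos_of_pos two_pos _
  have hEq : (0:ℝ) < (2:ℝ)^(ρ*(q:ℝ)) := Real.rpow_pos_of_pos two_pos _
  have hPn : (0:ℝ) < (1 + ((p:ℝ)+(q:ℝ)))^s := Real.rpow_pos_of_pos hN s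
  unfold wgt
  push_cast
  rw [show ((p:ℝ) ⊓ (q:ℝ)) = ((m:ℕ):ℝ) by rw [hm]; exact_mod_cast (Nat.cast_min (m := p) (n := q)).symm]
  calc ((p+q).factorial:ℝ)^σ * (2:ℝ)^(ρ*((p:ℝ)+(q:ℝ))) * (1+((p:ℝ)+(q:ℝ)))^s
      = ((p+q).factorial:ℝ)^σ * ((2:ℝ)^(ρ*(p:ℝ)) * (2:ℝ)^(ρ*(q:ℝ))) *
          (1+((p:ℝ)+(q:ℝ)))^s := by rw [h2]
    _ ≤ (((2:ℝ)^σ)^m * ((p.factorial:ℝ)^σ * (q.factorial:ℝ)^σ)) *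
          ((2:ℝ)^(ρ*(p:ℝ)) * (2:ℝ)^(ρ*(q:ℝ))) *
          ((1 + (m:ℝ)) ^ (⌈|s|⌉₊ : ℕ) * ((1+(p:ℝ))^s * (1+(q:ℝ))^s)) := by
        refine mul_le_mul (mul_le_mul h1 le_rfl (by positivity) (by positivity))
          h3'' hPn.le (by positivity)
    _ = ((2:ℝ)^σ)^m * (1 + (m:ℝ)) ^ (⌈|s|⌉₊ : ℕ) *
          (((p.factorial:ℝ)^σ * (2:ℝ)^(ρ*(p:ℝ)) * (1+(p:ℝ))^s) *
           ((q.factorial:ℝ)^σ * (2:ℝ)^(ρ*(q:ℝ)) * (1+(q:ℝ))^s)) := by ring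

lemma gns_summable (r : ℝ) (hr0 : 0 < r) (hr1 : r < 1) (k : ℕ) :
    Summable (fun m : ℕ => r ^ m * (1 + (m:ℝ)) ^ k) := by
  have h := summable_pow_mul_geometric_of_norm_lt_one (R := ℝ) k
    (by rwa [Real.norm_eq_abs, abs_of_pos hr0])
  have h1 : Summable (fun m : ℕ => ((m + 1 : ℕ) : ℝ) ^ k * r ^ (m + 1)) :=
    (summable_nat_add_iff 1).mpr h
  have h2 := h1.mul_left r⁻¹
  apply h2.congr
  intro m
  have : r ≠ 0 := hr0.ne'
  push_cast
  rw [pow_succ]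
  field_simp
  ring

lemma gns_shift (N : ℕ) (F : ℕ → ℝ) :
    ∑ n ∈ Finset.range N, F (n + 1) = ∑ m ∈ Finset.Ioo 0 (N + 1), F m := by
  have h : Finset.Ioo 0 (N + 1) = Finset.Ico 1 (N + 1) := by
    ext x; simp [Finset.mem_Ioo, Finset.mem_Ico]; omega
  rw [h, Finset.sum_Ico_eq_sum_range]
  simp only [Nat.add_sub_cancel]
  exact Finset.sum_congr rfl fun i _ => by rw [add_comm]

open Finset in
lemma gns_conv_swap (M : ℕ) (F : ℕ → ℕ → ℝ) (hF : ∀ p q, 0 ≤ F p q) :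
    ∑ n ∈ Ioo 0 M, ∑ p ∈ Ioo 0 n, F p (n - p) ≤
      ∑ p ∈ Ioo 0 M, ∑ q ∈ Ioo 0 M, F p q := by
  have hinj : Set.InjOn (fun x : Σ _ : ℕ, ℕ => (x.2, x.1 - x.2))
      ((Ioo 0 M).sigma fun n => Ioo 0 n) := by
    rintro ⟨n, p⟩ h ⟨n', p'⟩ h' he
    simp only [Finset.mem_coe, Finset.mem_sigma, Finset.mem_Ioo] at h h'
    simp only [Prod.mk.injEq] at he
    have : n = n' ∧ p = p' := by omega
    simp [this.1, this.2]
  calc ∑ n ∈ Ioo 0 M, ∑ p ∈ Ioo 0 n, F p (n - p)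
      = ∑ x ∈ (Ioo 0 M).sigma (fun n => Ioo 0 n), F x.2 (x.1 - x.2) :=
        (Finset.sum_sigma (Ioo 0 M) (fun n => Ioo 0 n)
          (fun x => F x.2 (x.1 - x.2))).symm
    _ = ∑ y ∈ ((Ioo 0 M).sigma (fun n => Ioo 0 n)).image
          (fun x : Σ _ : ℕ, ℕ => (x.2, x.1 - x.2)), F y.1 y.2 := by
        rw [Finset.sum_image (fun x hx y hy h => hinj hx hy h)]
    _ ≤ ∑ y ∈ Ioo 0 M ×ˢ Ioo 0 M, F y.1 y.2 := by
        apply Finset.sum_le_sum_of_subset_of_nonneg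
        · intro y hy
          simp only [Finset.mem_image, Finset.mem_sigma, Finset.mem_Ioo] at hy
          obtain ⟨⟨n, p⟩, ⟨hn, hp⟩, rfl⟩ := hy
          have hn' : 0 < n ∧ n < M := hn
          have hp' : 0 < p ∧ p < n := hp
          simp only [Finset.mem_product, Finset.mem_Ioo]
          omega
        · exact fun y _ _ => hF y.1 y.2
    _ = ∑ p ∈ Ioo 0 M, ∑ q ∈ Ioo 0 M, F p q := Finset.sum_product _ _ _

open Finset in
lemma gns_reflect (n : ℕ) (F : ℕ → ℝ) :
    ∑ p ∈ Ioo 0 n, F p = ∑ p ∈ Ioo 0 n, F (n - p) := by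
  refine Finset.sum_nbij' (fun p => n - p) (fun p => n - p) ?_ ?_ ?_ ?_ ?_ <;>
    simp only [Finset.mem_Ioo] <;> intros <;> first | omega | (congr 1; omega)

open Finset in
lemma gns_young (M : ℕ) (u v : ℕ → ℝ) (hu : ∀ p, 0 ≤ u p) (hv : ∀ q, 0 ≤ v q) :
    ∑ n ∈ Ioo 0 M, (∑ p ∈ Ioo 0 n, u p * v (n - p)) ^ 2 ≤
      (∑ p ∈ Ioo 0 M, u p) ^ 2 * ∑ q ∈ Ioo 0 M, v q ^ 2 := by
  set U := ∑ p ∈ Ioo 0 M, u p with hU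
  have hU0 : 0 ≤ U := Finset.sum_nonneg fun p _ => hu p
  have step1 : ∀ n ∈ Ioo 0 M, (∑ p ∈ Ioo 0 n, u p * v (n - p)) ^ 2 ≤
      U * ∑ p ∈ Ioo 0 n, u p * v (n - p) ^ 2 := by
    intro n hn
    have cs := Finset.sum_sq_le_sum_mul_sum_of_sq_eq_mul (Ioo 0 n)
      (f := fun p => u p) (g := fun p => u p * v (n - p) ^ 2)
      (r := fun p => u p * v (n - p))
      (fun p _ => hu p) (fun p _ => mul_nonneg (hu p) (sq_nonneg _))
      (fun p _ => by ring)
    refine cs.trans ?_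
    apply mul_le_mul_of_nonneg_right
    · apply Finset.sum_le_sum_of_subset_of_nonneg
      · intro x hx
        simp only [Finset.mem_Ioo] at hx hn ⊢
        omega
      · exact fun p _ _ => hu p
    · exact Finset.sum_nonneg fun p _ => mul_nonneg (hu p) (sq_nonneg _)
  calc ∑ n ∈ Ioo 0 M, (∑ p ∈ Ioo 0 n, u p * v (n - p)) ^ 2
      ≤ ∑ n ∈ Ioo 0 M, U * ∑ p ∈ Ioo 0 n, u p * v (n - p) ^ 2 :=
        Finset.sum_le_sum step1
    _ = U * ∑ n ∈ Ioo 0 M, ∑ p ∈ Ioo 0 n, u p * v (n - p) ^ 2 := by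
        rw [Finset.mul_sum]
    _ ≤ U * ∑ p ∈ Ioo 0 M, ∑ q ∈ Ioo 0 M, u p * v q ^ 2 := by
        apply mul_le_mul_of_nonneg_left _ hU0
        exact gns_conv_swap M (fun p q => u p * v q ^ 2)
          (fun p q => mul_nonneg (hu p) (sq_nonneg _))
    _ = U ^ 2 * ∑ q ∈ Ioo 0 M, v q ^ 2 := by
        simp_rw [← Finset.mul_sum]
        rw [← Finset.sum_mul]
        ring

set_option maxHeartbeats 1000000 in
open Finset in
/-- Norm estimate (`n.10b`): for `σ < -1`, `ρ, s ∈ ℝ` and the weights `w 0 = 1`,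
`w n = (n!)^σ·2^(ρn)·(1+n)^s` for `n ≥ 1`, there is a constant `γ > 0` such that the product
of the algebra satisfies `‖a ∘ b‖_w ≤ γ·‖a‖_w·‖b‖_w` for all elements `a`, `b`. -/
theorem graded_norm_estimate_sigma_lt_neg_one
    {E : ℕ → Type*} [∀ n, NormedAddCommGroup (E n)] [∀ n, InnerProductSpace ℝ (E n)]
    (mul : ∀ p q : ℕ, E p →ₗ[ℝ] E q →ₗ[ℝ] E (p + q))
    (hmul : ∀ p q : ℕ, 1 ≤ p → 1 ≤ q → ∀ (x : E p) (y : E q), ‖mul p q x y‖ ≤ ‖x‖ * ‖y‖)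
    (σ ρ s : ℝ) (hσ : σ < -1) :
    ∃ γ : ℝ, 0 < γ ∧
      ∀ (a₀ : ℝ) (a : ∀ n, E n), (∃ N, ∀ n, N ≤ n → a n = 0) →
      ∀ (b₀ : ℝ) (b : ∀ n, E n), (∃ N, ∀ n, N ≤ n → b n = 0) →
        wnorm (wgt σ ρ s) (a₀ * b₀) (gradedMul mul a₀ a b₀ b) ≤
          γ * wnorm (wgt σ ρ s) a₀ a * wnorm (wgt σ ρ s) b₀ b := by
  have hw : ∀ n, 0 < wgt σ ρ s n := gns_wgt_pos σ ρ s
  set r : ℝ := (2:ℝ) ^ σ with hr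
  have hr0 : 0 < r := Real.rpow_pos_of_pos two_pos σ
  have hr1 : r < 1 := Real.rpow_lt_one_of_one_lt_of_neg one_lt_two (by linarith)
  set k : ℕ := ⌈|s|⌉₊ with hk
  set g : ℕ → ℝ := fun m => r ^ m * (1 + (m:ℝ)) ^ k with hg
  have hg0 : ∀ m, 0 ≤ g m := fun m => by
    have : (0:ℝ) ≤ 1 + (m:ℝ) := by positivity
    positivity
  have hgsum : Summable g := gns_summable r hr0 hr1 k
  set G : ℝ := ∑' m, g m with hG
  have hG0 : 0 ≤ G := tsum_nonneg hg0
  set f : ℕ → ℝ := fun m => Real.sqrt (g m) with hf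
  have hf0 : ∀ m, 0 ≤ f m := fun m => Real.sqrt_nonneg _
  refine ⟨Real.sqrt (8 * G + 4), Real.sqrt_pos.mpr (by linarith), ?_⟩
  rintro a₀ a ⟨Na, ha⟩ b₀ b ⟨Nb, hb⟩
  set N : ℕ := Na + Nb with hN
  set M : ℕ := N + 1 with hM
  set c : ∀ n, E n := gradedMul mul a₀ a b₀ b with hc
  set α : ℕ → ℝ := fun n => Real.sqrt (wgt σ ρ s n) * ‖a n‖ with hα
  set β : ℕ → ℝ := fun n => Real.sqrt (wgt σ ρ s n) * ‖b n‖ with hβ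
  have hα0 : ∀ n, 0 ≤ α n := fun n => mul_nonneg (Real.sqrt_nonneg _) (norm_nonneg _)
  have hβ0 : ∀ n, 0 ≤ β n := fun n => mul_nonneg (Real.sqrt_nonneg _) (norm_nonneg _)
  -- the square-root weight inequality
  have hkey : ∀ p q : ℕ, Real.sqrt (wgt σ ρ s (p + q)) ≤
      (f p + f q) * (Real.sqrt (wgt σ ρ s p) * Real.sqrt (wgt σ ρ s q)) := by
    intro p q
    have h' : wgt σ ρ s (p + q) ≤ g (min p q) * (wgt σ ρ s p * wgt σ ρ s q) := by
      have h := gns_wkey σ ρ s (by linarith) p q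
      rw [← Nat.cast_min] at h
      simp only [hg, hr, hk]
      exact h
    have hmin : f (min p q) ≤ f p + f q := by
      rcases min_cases p q with ⟨h1, _⟩ | ⟨h1, _⟩ <;> rw [h1]
      · linarith [hf0 q]
      · linarith [hf0 p]
    calc Real.sqrt (wgt σ ρ s (p + q))
        ≤ Real.sqrt (g (min p q) * (wgt σ ρ s p * wgt σ ρ s q)) :=
          Real.sqrt_le_sqrt h'
      _ = f (min p q) * (Real.sqrt (wgt σ ρ s p) * Real.sqrt (wgt σ ρ s q)) := by
          rw [Real.sqrt_mul (hg0 _), Real.sqrt_mul (hw p).le]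
      _ ≤ (f p + f q) * (Real.sqrt (wgt σ ρ s p) * Real.sqrt (wgt σ ρ s q)) :=
          mul_le_mul_of_nonneg_right hmin
            (mul_nonneg (Real.sqrt_nonneg _) (Real.sqrt_nonneg _))
  -- pointwise norm bound
  have hnorm : ∀ n : ℕ, ‖c n‖ ≤ |a₀| * ‖b n‖ + |b₀| * ‖a n‖ +
      ∑ p ∈ Ioo 0 n, ‖a p‖ * ‖b (n - p)‖ := by
    intro n
    rw [hc]
    simp only [gradedMul]
    calc ‖a₀ • b n + b₀ • a n + ∑ p ∈ Ioo 0 n,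
          if h : p + (n - p) = n then cast (congrArg E h) (mul p (n - p) (a p) (b (n - p)))
          else 0‖
        ≤ ‖a₀ • b n‖ + ‖b₀ • a n‖ + ‖∑ p ∈ Ioo 0 n,
            if h : p + (n - p) = n then cast (congrArg E h) (mul p (n - p) (a p) (b (n - p)))
            else 0‖ := norm_add₃_le
      _ ≤ |a₀| * ‖b n‖ + |b₀| * ‖a n‖ + ∑ p ∈ Ioo 0 n, ‖a p‖ * ‖b (n - p)‖ := by
          rw [norm_smul, norm_smul, Real.norm_eq_abs a₀, Real.norm_eq_abs b₀]
          refine add_le_add_right ?_ _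
          refine (norm_sum_le _ _).trans (Finset.sum_le_sum ?_)
          intro p hp
          rw [Finset.mem_Ioo] at hp
          have h : p + (n - p) = n := by omega
          rw [dif_pos h, gns_cast_norm h]
          exact hmul p (n - p) hp.1 (by omega) _ _
  -- pointwise weighted bound
  have hpt : ∀ n : ℕ, Real.sqrt (wgt σ ρ s n) * ‖c n‖ ≤
      |a₀| * β n + |b₀| * α n +
        ((∑ p ∈ Ioo 0 n, (f p * α p) * β (n - p)) +
         (∑ p ∈ Ioo 0 n, (f p * β p) * α (n - p))) := by
    intro n
    have hre : ∑ p ∈ Ioo 0 n, (f p * β p) * α (n - p) =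
        ∑ p ∈ Ioo 0 n, (f (n - p) * β (n - p)) * α p := by
      rw [gns_reflect n (fun t => (f t * β t) * α (n - t))]
      refine Finset.sum_congr rfl fun p hp => ?_
      rw [Finset.mem_Ioo] at hp
      rw [show n - (n - p) = p by omega]
    calc Real.sqrt (wgt σ ρ s n) * ‖c n‖
        ≤ Real.sqrt (wgt σ ρ s n) * (|a₀| * ‖b n‖ + |b₀| * ‖a n‖ +
            ∑ p ∈ Ioo 0 n, ‖a p‖ * ‖b (n - p)‖) :=
          mul_le_mul_of_nonneg_left (hnorm n) (Real.sqrt_nonneg _)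
      _ = |a₀| * β n + |b₀| * α n +
            ∑ p ∈ Ioo 0 n, Real.sqrt (wgt σ ρ s n) * (‖a p‖ * ‖b (n - p)‖) := by
          simp only [hα, hβ]
          rw [mul_add, mul_add, Finset.mul_sum]
          ring
      _ ≤ |a₀| * β n + |b₀| * α n +
            ((∑ p ∈ Ioo 0 n, (f p * α p) * β (n - p)) +
             (∑ p ∈ Ioo 0 n, (f p * β p) * α (n - p))) := by
          refine add_le_add_right ?_ _
          rw [hre, ← Finset.sum_add_distrib]
          refine Finset.sum_le_sum fun p hp => ?_
          rw [Finset.mem_Ioo] at hp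
          have hq : p + (n - p) = n := by omega
          have hk2 := hkey p (n - p)
          rw [hq] at hk2
          calc Real.sqrt (wgt σ ρ s n) * (‖a p‖ * ‖b (n - p)‖)
              ≤ ((f p + f (n - p)) * (Real.sqrt (wgt σ ρ s p) *
                  Real.sqrt (wgt σ ρ s (n - p)))) * (‖a p‖ * ‖b (n - p)‖) :=
                mul_le_mul_of_nonneg_right hk2
                  (mul_nonneg (norm_nonneg _) (norm_nonneg _))
            _ = (f p * α p) * β (n - p) + (f (n - p) * β (n - p)) * α p := by
                simp only [hα, hβ]
                ring
  -- squares
  have hsq : ∀ n : ℕ, wgt σ ρ s n * ‖c n‖ ^ 2 ≤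
      4 * (a₀ ^ 2 * β n ^ 2 + b₀ ^ 2 * α n ^ 2 +
        (∑ p ∈ Ioo 0 n, (f p * α p) * β (n - p)) ^ 2 +
        (∑ p ∈ Ioo 0 n, (f p * β p) * α (n - p)) ^ 2) := by
    intro n
    have h := hpt n
    have he1 : 0 ≤ ∑ p ∈ Ioo 0 n, (f p * α p) * β (n - p) :=
      Finset.sum_nonneg fun p _ =>
        mul_nonneg (mul_nonneg (hf0 p) (hα0 p)) (hβ0 _)
    have he2 : 0 ≤ ∑ p ∈ Ioo 0 n, (f p * β p) * α (n - p) :=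
      Finset.sum_nonneg fun p _ =>
        mul_nonneg (mul_nonneg (hf0 p) (hβ0 p)) (hα0 _)
    have hu : 0 ≤ |a₀| * β n := mul_nonneg (abs_nonneg _) (hβ0 n)
    have hv : 0 ≤ |b₀| * α n := mul_nonneg (abs_nonneg _) (hα0 n)
    have hL : 0 ≤ Real.sqrt (wgt σ ρ s n) * ‖c n‖ :=
      mul_nonneg (Real.sqrt_nonneg _) (norm_nonneg _)
    have e : wgt σ ρ s n * ‖c n‖ ^ 2 = (Real.sqrt (wgt σ ρ s n) * ‖c n‖) ^ 2 := by
      rw [mul_pow, Real.sq_sqrt (hw n).le]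
    rw [e]
    nlinarith [h, he1, he2, hu, hv, hL, sq_abs a₀, sq_abs b₀,
      sq_nonneg (|a₀| * β n - |b₀| * α n),
      sq_nonneg (|a₀| * β n - ∑ p ∈ Ioo 0 n, (f p * α p) * β (n - p)),
      sq_nonneg (|a₀| * β n - ∑ p ∈ Ioo 0 n, (f p * β p) * α (n - p)),
      sq_nonneg (|b₀| * α n - ∑ p ∈ Ioo 0 n, (f p * α p) * β (n - p)),
      sq_nonneg (|b₀| * α n - ∑ p ∈ Ioo 0 n, (f p * β p) * α (n - p)),
      sq_nonneg ((∑ p ∈ Ioo 0 n, (f p * α p) * β (n - p)) -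
        ∑ p ∈ Ioo 0 n, (f p * β p) * α (n - p))]
  -- finite-sum identities for the three tsums
  set Sa : ℝ := ∑ n ∈ Ioo 0 M, α n ^ 2 with hSa
  set Sb : ℝ := ∑ n ∈ Ioo 0 M, β n ^ 2 with hSb
  set Sc : ℝ := ∑ n ∈ Ioo 0 M, wgt σ ρ s n * ‖c n‖ ^ 2 with hSc
  have hSa0 : 0 ≤ Sa := Finset.sum_nonneg fun n _ => sq_nonneg _
  have hSb0 : 0 ≤ Sb := Finset.sum_nonneg fun n _ => sq_nonneg _
  have hta : ∑' n : ℕ, wgt σ ρ s (n + 1) * ‖a (n + 1)‖ ^ 2 = Sa := by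
    rw [tsum_eq_sum (s := Finset.range N)
      (fun n hn => by
        rw [ha (n + 1) (by simp at hn; omega), norm_zero]
        ring)]
    rw [gns_shift N (fun m => wgt σ ρ s m * ‖a m‖ ^ 2), hSa, hM]
    refine Finset.sum_congr rfl fun m _ => ?_
    simp only [hα]
    rw [mul_pow, Real.sq_sqrt (hw m).le]
  have htb : ∑' n : ℕ, wgt σ ρ s (n + 1) * ‖b (n + 1)‖ ^ 2 = Sb := by
    rw [tsum_eq_sum (s := Finset.range N)
      (fun n hn => by
        rw [hb (n + 1) (by simp at hn; omega), norm_zero]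
        ring)]
    rw [gns_shift N (fun m => wgt σ ρ s m * ‖b m‖ ^ 2), hSb, hM]
    refine Finset.sum_congr rfl fun m _ => ?_
    simp only [hβ]
    rw [mul_pow, Real.sq_sqrt (hw m).le]
  have hc0 : ∀ n, N ≤ n → c (n + 1) = 0 := by
    intro n hn
    rw [hc]
    simp only [gradedMul]
    rw [ha (n + 1) (by omega), hb (n + 1) (by omega), smul_zero, smul_zero,
      add_zero, zero_add]
    refine Finset.sum_eq_zero fun p hp => ?_
    rw [Finset.mem_Ioo] at hp
    have h : p + (n + 1 - p) = n + 1 := by omega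
    rw [dif_pos h]
    rcases le_or_gt Na p with h1 | h1
    · rw [ha p h1, map_zero, LinearMap.zero_apply]
      exact gns_cast_zero h
    · rw [hb (n + 1 - p) (by omega), map_zero]
      exact gns_cast_zero h
  have htc : ∑' n : ℕ, wgt σ ρ s (n + 1) * ‖c (n + 1)‖ ^ 2 = Sc := by
    rw [tsum_eq_sum (s := Finset.range N)
      (fun n hn => by
        rw [hc0 n (by simp at hn; omega), norm_zero]
        ring)]
    rw [gns_shift N (fun m => wgt σ ρ s m * ‖c m‖ ^ 2), hSc, hM]
  -- Young / Cauchy-Schwarz bounds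
  have hU : (∑ p ∈ Ioo 0 M, f p * α p) ^ 2 ≤ G * Sa := by
    calc (∑ p ∈ Ioo 0 M, f p * α p) ^ 2
        ≤ (∑ p ∈ Ioo 0 M, f p ^ 2) * ∑ p ∈ Ioo 0 M, α p ^ 2 :=
          Finset.sum_mul_sq_le_sq_mul_sq _ f α
      _ = (∑ p ∈ Ioo 0 M, g p) * Sa := by
          rw [hSa]
          congr 1
          exact Finset.sum_congr rfl fun p _ => Real.sq_sqrt (hg0 p)
      _ ≤ G * Sa := mul_le_mul_of_nonneg_right
          (Summable.sum_le_tsum _ (fun i _ => hg0 i) hgsum) hSa0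
  have hV : (∑ p ∈ Ioo 0 M, f p * β p) ^ 2 ≤ G * Sb := by
    calc (∑ p ∈ Ioo 0 M, f p * β p) ^ 2
        ≤ (∑ p ∈ Ioo 0 M, f p ^ 2) * ∑ p ∈ Ioo 0 M, β p ^ 2 :=
          Finset.sum_mul_sq_le_sq_mul_sq _ f β
      _ = (∑ p ∈ Ioo 0 M, g p) * Sb := by
          rw [hSb]
          congr 1
          exact Finset.sum_congr rfl fun p _ => Real.sq_sqrt (hg0 p)
      _ ≤ G * Sb := mul_le_mul_of_nonneg_right
          (Summable.sum_le_tsum _ (fun i _ => hg0 i) hgsum) hSb0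
  have hE1 : ∑ n ∈ Ioo 0 M, (∑ p ∈ Ioo 0 n, (f p * α p) * β (n - p)) ^ 2 ≤
      G * Sa * Sb := by
    calc ∑ n ∈ Ioo 0 M, (∑ p ∈ Ioo 0 n, (f p * α p) * β (n - p)) ^ 2
        ≤ (∑ p ∈ Ioo 0 M, f p * α p) ^ 2 * ∑ q ∈ Ioo 0 M, β q ^ 2 :=
          gns_young M (fun p => f p * α p) β
            (fun p => mul_nonneg (hf0 p) (hα0 p)) hβ0
      _ ≤ G * Sa * Sb := mul_le_mul_of_nonneg_right hU hSb0
  have hE2 : ∑ n ∈ Ioo 0 M, (∑ p ∈ Ioo 0 n, (f p * β p) * α (n - p)) ^ 2 ≤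
      G * Sb * Sa := by
    calc ∑ n ∈ Ioo 0 M, (∑ p ∈ Ioo 0 n, (f p * β p) * α (n - p)) ^ 2
        ≤ (∑ p ∈ Ioo 0 M, f p * β p) ^ 2 * ∑ q ∈ Ioo 0 M, α q ^ 2 :=
          gns_young M (fun p => f p * β p) α
            (fun p => mul_nonneg (hf0 p) (hβ0 p)) hα0
      _ ≤ G * Sb * Sa := mul_le_mul_of_nonneg_right hV hSa0
  -- the main quadratic bound
  have hScb : Sc ≤ 4 * (a₀ ^ 2 * Sb + b₀ ^ 2 * Sa + G * Sa * Sb + G * Sb * Sa) := by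
    calc Sc ≤ ∑ n ∈ Ioo 0 M, 4 * (a₀ ^ 2 * β n ^ 2 + b₀ ^ 2 * α n ^ 2 +
          (∑ p ∈ Ioo 0 n, (f p * α p) * β (n - p)) ^ 2 +
          (∑ p ∈ Ioo 0 n, (f p * β p) * α (n - p)) ^ 2) := by
          rw [hSc]
          exact Finset.sum_le_sum fun n _ => hsq n
      _ = 4 * (a₀ ^ 2 * Sb + b₀ ^ 2 * Sa +
            (∑ n ∈ Ioo 0 M, (∑ p ∈ Ioo 0 n, (f p * α p) * β (n - p)) ^ 2) +
            (∑ n ∈ Ioo 0 M, (∑ p ∈ Ioo 0 n, (f p * β p) * α (n - p)) ^ 2)) := by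
          rw [← Finset.mul_sum]
          congr 1
          rw [Finset.sum_add_distrib, Finset.sum_add_distrib, Finset.sum_add_distrib,
            ← Finset.mul_sum, ← Finset.mul_sum, hSa, hSb]
      _ ≤ 4 * (a₀ ^ 2 * Sb + b₀ ^ 2 * Sa + G * Sa * Sb + G * Sb * Sa) := by
          linarith [hE1, hE2]
  have hmain : (a₀ * b₀) ^ 2 + Sc ≤
      (8 * G + 4) * ((a₀ ^ 2 + Sa) * (b₀ ^ 2 + Sb)) := by
    nlinarith [sq_nonneg a₀, sq_nonneg b₀, mul_nonneg hSa0 hSb0,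
      mul_nonneg (mul_nonneg hG0 hSa0) hSb0, mul_nonneg (sq_nonneg a₀) (sq_nonneg b₀),
      mul_nonneg (sq_nonneg a₀) hSb0, mul_nonneg (sq_nonneg b₀) hSa0,
      mul_nonneg (mul_nonneg hG0 (sq_nonneg a₀)) (sq_nonneg b₀),
      mul_nonneg (mul_nonneg hG0 (sq_nonneg a₀)) hSb0,
      mul_nonneg (mul_nonneg hG0 (sq_nonneg b₀)) hSa0]
  -- conclude
  rw [wnorm, wnorm, wnorm, hta, htb, htc]
  calc Real.sqrt ((a₀ * b₀) ^ 2 + Sc)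
      ≤ Real.sqrt ((8 * G + 4) * ((a₀ ^ 2 + Sa) * (b₀ ^ 2 + Sb))) :=
        Real.sqrt_le_sqrt hmain
    _ = Real.sqrt (8 * G + 4) * (Real.sqrt (a₀ ^ 2 + Sa) * Real.sqrt (b₀ ^ 2 + Sb)) := by
        rw [Real.sqrt_mul (by linarith), Real.sqrt_mul (by positivity)]
    _ = Real.sqrt (8 * G + 4) * Real.sqrt (a₀ ^ 2 + Sa) * Real.sqrt (b₀ ^ 2 + Sb) := by
        ring
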